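/- Let N be a 1-unconditional norm on ℝ² with N(1, 0) = N(0, 1) = 1, let X₁ and X₂ be nonzero Banach spaces, and let X be the product X₁ × X₂ equipped with a complete norm satisfying ‖(x₁, x₂)‖ = N(‖x₁‖, ‖x₂‖). If X has the Daugavet property, then either N(a₁, a₂) = |a₁| + |a₂| for all (a₁, a₂) ∈ ℝ², or N(a₁, a₂) = max{|a₁|, |a₂|} for all (a₁, a₂) ∈ ℝ². -/

import Mathlib

/-- A Banach space `X` has the *Daugavet property* if every rank-one operator
`z ↦ f z • y` (with `f ≠ 0`, `y ≠ 0`) satisfies `‖Id + T‖ = 1 + ‖T‖`. -/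
def DaugavetProperty (X : Type*) [NormedAddCommGroup X] [NormedSpace ℝ X] : Prop :=
  ∀ (f : X →L[ℝ] ℝ) (y : X), f ≠ 0 → y ≠ 0 →
    ‖ContinuousLinearMap.id ℝ X + f.smulRight y‖ = 1 + ‖f.smulRight y‖


lemma nmono (N : Seminorm ℝ (ℝ × ℝ))
    (hu : ∀ a : ℝ × ℝ, N a = N (|a.1|, |a.2|)) :
    ∀ {x y x' y' : ℝ}, |x| ≤ x' → |y| ≤ y' → N (x, y) ≤ N (x', y') := by
  have step1 : ∀ x x' y : ℝ, |x| ≤ x' → N (x, y) ≤ N (x', y) := by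
    intro x x' y hx
    rcases eq_or_lt_of_le (le_trans (abs_nonneg x) hx) with h0 | h0
    · have hx0 : x = 0 := abs_nonpos_iff.mp (h0 ▸ hx)
      rw [hx0, ← h0]
    · set θ := x / x' with hθ
      have hθ1 : |θ| ≤ 1 := by
        rw [hθ, abs_div, abs_of_pos h0]
        exact div_le_one_of_le₀ hx (le_of_lt h0)
      obtain ⟨hθl, hθr⟩ := abs_le.mp hθ1
      have hkey : ((x, y) : ℝ × ℝ)
          = ((1 + θ) / 2) • ((x', y) : ℝ × ℝ) + ((1 - θ) / 2) • ((-x', y) : ℝ × ℝ) := by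
        have hxx : θ * x' = x := div_mul_cancel₀ x (ne_of_gt h0)
        ext <;> simp [Prod.smul_mk, smul_eq_mul] <;> nlinarith
      have hneg : N (-x', y) = N (x', y) := by
        rw [hu (-x', y), hu (x', y)]; simp
      calc N (x, y) = N (((1 + θ) / 2) • ((x', y) : ℝ × ℝ)
            + ((1 - θ) / 2) • ((-x', y) : ℝ × ℝ)) := by rw [← hkey]
        _ ≤ N (((1 + θ) / 2) • ((x', y) : ℝ × ℝ))
            + N (((1 - θ) / 2) • ((-x', y) : ℝ × ℝ)) := map_add_le_add N _ _
        _ = |(1 + θ) / 2| * N (x', y) + |(1 - θ) / 2| * N (-x', y) := by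
            rw [map_smul_eq_mul, map_smul_eq_mul, Real.norm_eq_abs, Real.norm_eq_abs]
        _ = ((1 + θ) / 2) * N (x', y) + ((1 - θ) / 2) * N (x', y) := by
            rw [hneg, abs_of_nonneg (by linarith), abs_of_nonneg (by linarith)]
        _ = N (x', y) := by ring
  have step2 : ∀ x y y' : ℝ, |y| ≤ y' → N (x, y) ≤ N (x, y') := by
    intro x y y' hy
    rcases eq_or_lt_of_le (le_trans (abs_nonneg y) hy) with h0 | h0
    · have hy0 : y = 0 := abs_nonpos_iff.mp (h0 ▸ hy)
      rw [hy0, ← h0]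
    · set θ := y / y' with hθ
      have hθ1 : |θ| ≤ 1 := by
        rw [hθ, abs_div, abs_of_pos h0]
        exact div_le_one_of_le₀ hy (le_of_lt h0)
      obtain ⟨hθl, hθr⟩ := abs_le.mp hθ1
      have hkey : ((x, y) : ℝ × ℝ)
          = ((1 + θ) / 2) • ((x, y') : ℝ × ℝ) + ((1 - θ) / 2) • ((x, -y') : ℝ × ℝ) := by
        have hyy : θ * y' = y := div_mul_cancel₀ y (ne_of_gt h0)
        ext <;> simp [Prod.smul_mk, smul_eq_mul] <;> nlinarith
      have hneg : N (x, -y') = N (x, y') := by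
        rw [hu (x, -y'), hu (x, y')]; simp
      calc N (x, y) = N (((1 + θ) / 2) • ((x, y') : ℝ × ℝ)
            + ((1 - θ) / 2) • ((x, -y') : ℝ × ℝ)) := by rw [← hkey]
        _ ≤ N (((1 + θ) / 2) • ((x, y') : ℝ × ℝ))
            + N (((1 - θ) / 2) • ((x, -y') : ℝ × ℝ)) := map_add_le_add N _ _
        _ = |(1 + θ) / 2| * N (x, y') + |(1 - θ) / 2| * N (x, -y') := by
            rw [map_smul_eq_mul, map_smul_eq_mul, Real.norm_eq_abs, Real.norm_eq_abs]
        _ = ((1 + θ) / 2) * N (x, y') + ((1 - θ) / 2) * N (x, y') := by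
            rw [hneg, abs_of_nonneg (by linarith), abs_of_nonneg (by linarith)]
        _ = N (x, y') := by ring
  intro x y x' y' hx hy
  exact le_trans (step1 x x' y hx) (step2 x' y y' hy)

lemma ncoord1 (N : Seminorm ℝ (ℝ × ℝ)) (h10 : N (1, 0) = 1) (c : ℝ) : N (c, 0) = |c| := by
  have : ((c, 0) : ℝ × ℝ) = c • ((1, 0) : ℝ × ℝ) := by simp
  rw [this, map_smul_eq_mul, Real.norm_eq_abs, h10, mul_one]

lemma ncoord2 (N : Seminorm ℝ (ℝ × ℝ)) (h01 : N (0, 1) = 1) (c : ℝ) : N (0, c) = |c| := by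
  have : ((0, c) : ℝ × ℝ) = c • ((0, 1) : ℝ × ℝ) := by simp
  rw [this, map_smul_eq_mul, Real.norm_eq_abs, h01, mul_one]

set_option maxHeartbeats 1000000 in
lemma key_aux (N : Seminorm ℝ (ℝ × ℝ))
    (hNuncond : ∀ a : ℝ × ℝ, N a = N (|a.1|, |a.2|))
    (hN10 : N (1, 0) = 1) (hN01 : N (0, 1) = 1)
    (X₁ X₂ : Type*)
    [NormedAddCommGroup X₁] [NormedSpace ℝ X₁] [Nontrivial X₁]
    [NormedAddCommGroup X₂] [NormedSpace ℝ X₂] [Nontrivial X₂]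
    (V : Type*) [NormedAddCommGroup V] [NormedSpace ℝ V]
    (e : V ≃ₗ[ℝ] X₁ × X₂)
    (hnorm : ∀ v : V, ‖v‖ = N (‖(e v).1‖, ‖(e v).2‖))
    (hV : DaugavetProperty V) :
    ∀ d > (0:ℝ), ∀ ε > (0:ℝ), ∃ t ≥ (0:ℝ), N (1, t) ≤ 1 + ε ∧ 1 + d - ε ≤ N (1, t + d) := by
  intro d hd ε hε
  set ε' := min ε (ε * d) with hε'def
  have hε' : 0 < ε' := lt_min hε (mul_pos hε hd)
  have hε'le : ε' ≤ ε := min_le_left _ _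
  have hε'led : ε' ≤ ε * d := min_le_right _ _
  -- pick unit vectors
  obtain ⟨x₀, hx₀⟩ := exists_ne (0 : X₁)
  obtain ⟨y₀, hy₀⟩ := exists_ne (0 : X₂)
  set u : X₁ := ‖x₀‖⁻¹ • x₀ with hudef
  set v : X₂ := ‖y₀‖⁻¹ • y₀ with hvdef
  have hu : ‖u‖ = 1 := norm_smul_inv_norm hx₀
  have hv : ‖v‖ = 1 := norm_smul_inv_norm hy₀
  have hune : u ≠ 0 := by intro h; rw [h, norm_zero] at hu; exact zero_ne_one hu
  have hvne : v ≠ 0 := by intro h; rw [h, norm_zero] at hv; exact zero_ne_one hv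
  obtain ⟨f, hf1, hfu⟩ := exists_dual_vector ℝ u (norm_ne_zero_iff.mpr hune)
  rw [hu] at hfu
  -- component bound
  have hcomp1 : ∀ z : V, ‖(e z).1‖ ≤ ‖z‖ := by
    intro z
    rw [hnorm z]
    calc ‖(e z).1‖ = N (‖(e z).1‖, 0) := by
          rw [ncoord1 N hN10, abs_of_nonneg (norm_nonneg _)]
      _ ≤ N (‖(e z).1‖, ‖(e z).2‖) :=
          nmono N hNuncond (by rw [abs_of_nonneg (norm_nonneg _)]) (by simp)
  -- the functional F on V
  set L : V →ₗ[ℝ] ℝ :=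
    (f : X₁ →ₗ[ℝ] ℝ).comp ((LinearMap.fst ℝ X₁ X₂).comp (e : V →ₗ[ℝ] X₁ × X₂)) with hLdef
  have hLz : ∀ z : V, L z = f (e z).1 := fun z => rfl
  have hLbound : ∀ z : V, ‖L z‖ ≤ 1 * ‖z‖ := by
    intro z
    rw [hLz, one_mul]
    calc ‖f (e z).1‖ ≤ ‖f‖ * ‖(e z).1‖ := f.le_opNorm _
      _ = ‖(e z).1‖ := by rw [hf1, one_mul]
      _ ≤ ‖z‖ := hcomp1 z
  set F : V →L[ℝ] ℝ := L.mkContinuous 1 hLbound with hFdef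
  have hFz : ∀ z : V, F z = f (e z).1 := fun z => rfl
  have hFle : ∀ z : V, |F z| ≤ ‖(e z).1‖ := by
    intro z
    rw [← Real.norm_eq_abs, hFz]
    calc ‖f (e z).1‖ ≤ ‖f‖ * ‖(e z).1‖ := f.le_opNorm _
      _ = ‖(e z).1‖ := by rw [hf1, one_mul]
  -- the rank-one target y
  set y : V := e.symm ((0 : X₁), d • v) with hydef
  have hey : e y = ((0 : X₁), d • v) := e.apply_symm_apply _
  have hynorm : ‖y‖ = d := by
    rw [hnorm y, hey]
    simp only [norm_zero]
    rw [norm_smul, Real.norm_eq_abs, hv, mul_one, ncoord2 N hN01, abs_abs, abs_of_pos hd]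
  have hyne : y ≠ 0 := by
    intro h; rw [h, norm_zero] at hynorm; exact (ne_of_gt hd) hynorm.symm
  set z₀ : V := e.symm ((u : X₁), (0 : X₂)) with hz₀def
  have hez₀ : e z₀ = ((u : X₁), (0 : X₂)) := e.apply_symm_apply _
  have hz₀norm : ‖z₀‖ = 1 := by
    rw [hnorm z₀, hez₀]
    simp only [norm_zero, hu]
    rw [ncoord1 N hN10, abs_one]
  have hFz₀ : F z₀ = 1 := by rw [hFz, hez₀]; exact_mod_cast hfu
  have hFne : F ≠ 0 := by
    intro h; rw [h] at hFz₀; simp at hFz₀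
  set T := F.smulRight y with hTdef
  have hTz₀ : T z₀ = y := by
    rw [hTdef, ContinuousLinearMap.smulRight_apply, hFz₀, one_smul]
  have hTd : d ≤ ‖T‖ := by
    have := T.le_opNorm z₀
    rw [hTz₀, hynorm, hz₀norm, mul_one] at this
    exact this
  have hDP := hV F y hFne hyne
  have hlt : 1 + d - ε' < ‖ContinuousLinearMap.id ℝ V + T‖ := by
    rw [hDP]; linarith
  obtain ⟨z, hz1, hz2⟩ := (ContinuousLinearMap.id ℝ V + T).exists_lt_apply_of_lt_opNorm hlt
  set s := ‖(e z).1‖ with hsdef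
  set t := ‖(e z).2‖ with htdef
  have hs0 : 0 ≤ s := norm_nonneg _
  have ht0 : 0 ≤ t := norm_nonneg _
  have hNst : N (s, t) ≤ 1 := by rw [← hnorm z]; exact le_of_lt hz1
  -- compute the image
  have happ : (ContinuousLinearMap.id ℝ V + T) z = z + F z • y := by
    simp [hTdef, ContinuousLinearMap.add_apply]
  have heimg : e (z + F z • y) = ((e z).1, (e z).2 + (F z * d) • v) := by
    have h1 : F z • (((0 : X₁), d • v) : X₁ × X₂) = ((0 : X₁), (F z * d) • v) := by
      rw [Prod.smul_mk, smul_zero, smul_smul]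
    rw [map_add, map_smul, hey, h1]
    exact Prod.ext (by rw [Prod.fst_add]; exact add_zero _) (by rw [Prod.snd_add])
  have himgnorm : ‖(ContinuousLinearMap.id ℝ V + T) z‖ ≤ N (s, t + s * d) := by
    rw [happ, hnorm (z + F z • y), heimg]
    apply nmono N hNuncond
    · rw [abs_of_nonneg hs0]
    · rw [abs_of_nonneg (norm_nonneg _)]
      calc ‖(e z).2 + (F z * d) • v‖ ≤ t + ‖(F z * d) • v‖ := norm_add_le _ _
        _ = t + |F z| * d := by
            rw [norm_smul, Real.norm_eq_abs, hv, mul_one, abs_mul, abs_of_pos hd]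
        _ ≤ t + s * d := by
            have := hFle z
            nlinarith
  have hmain : 1 + d - ε' < N (s, t + s * d) := lt_of_lt_of_le hz2 himgnorm
  -- upper bound gives s close to 1
  have hub : N (s, t + s * d) ≤ 1 + s * d := by
    have htri : N (s, t + s * d) ≤ N (s, t) + N (0, s * d) := by
      have : ((s, t + s * d) : ℝ × ℝ) = (s, t) + (0, s * d) := by simp
      rw [this]; exact map_add_le_add N _ _
    rw [ncoord2 N hN01, abs_of_nonneg (by positivity)] at htri
    linarith
  have hs1 : s ≤ 1 := by
    have : N (s, 0) ≤ N (s, t) :=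
      nmono N hNuncond (by rw [abs_of_nonneg hs0]) (by simp [ht0])
    rw [ncoord1 N hN10, abs_of_nonneg hs0] at this
    linarith
  have hslow : 1 - s ≤ ε' / d := by
    have h1 : 1 + d - ε' < 1 + s * d := lt_of_lt_of_le hmain hub
    have h2 : d - ε' < s * d := by linarith
    rw [le_div_iff₀ hd]
    nlinarith
  have hsε : 1 - s ≤ ε := by
    have : ε' / d ≤ ε := by
      rw [div_le_iff₀ hd]; exact hε'led
    linarith
  refine ⟨t, ht0, ?_, ?_⟩
  · -- N (1, t) ≤ 1 + ε
    have htri : N (1, t) ≤ N (s, t) + N (1 - s, 0) := by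
      have : ((1, t) : ℝ × ℝ) = (s, t) + (1 - s, 0) := by simp
      rw [this]; exact map_add_le_add N _ _
    rw [ncoord1 N hN10, abs_of_nonneg (by linarith)] at htri
    linarith
  · -- 1 + d - ε ≤ N (1, t + d)
    have hmono : N (s, t + s * d) ≤ N (1, t + d) := by
      apply nmono N hNuncond
      · rw [abs_of_nonneg hs0]; exact hs1
      · rw [abs_of_nonneg (by positivity)]
        nlinarith
    linarith


lemma claim_beta (M : Seminorm ℝ (ℝ × ℝ))
    (hu : ∀ a : ℝ × ℝ, M a = M (|a.1|, |a.2|))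
    (h10 : M (1, 0) = 1) (h01 : M (0, 1) = 1)
    (key : ∀ d > (0:ℝ), ∀ ε > (0:ℝ), ∃ t ≥ (0:ℝ), M (1, t) ≤ 1 + ε ∧ 1 + d - ε ≤ M (1, t + d)) :
    ∃ b : ℝ, 0 ≤ b ∧ b ≤ 1 ∧ M (1, b) = 1 ∧ ∀ d > (0:ℝ), M (1, b + d) = 1 + d := by
  set S : Set ℝ := {t : ℝ | 0 ≤ t ∧ M (1, t) ≤ 1} with hSdef
  have hS0 : (0:ℝ) ∈ S := ⟨le_refl 0, by rw [h10]⟩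
  have hSne : S.Nonempty := ⟨0, hS0⟩
  have hSub : ∀ t ∈ S, t ≤ 1 := by
    intro t ht
    have h1 : M (0, t) ≤ M (1, t) :=
      nmono M hu (by simp) (by rw [abs_of_nonneg ht.1])
    rw [ncoord2 M h01, abs_of_nonneg ht.1] at h1
    exact le_trans h1 ht.2
  have hSbdd : BddAbove S := ⟨1, hSub⟩
  set b := sSup S with hbdef
  have hb0 : 0 ≤ b := le_csSup hSbdd hS0
  have hb1 : b ≤ 1 := csSup_le hSne hSub
  -- triangle helper
  have htri : ∀ t₁ t₂ : ℝ, M (1, t₁ + t₂) ≤ M (1, t₁) + |t₂| := by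
    intro t₁ t₂
    have h : ((1, t₁ + t₂) : ℝ × ℝ) = (1, t₁) + (0, t₂) := by simp
    calc M (1, t₁ + t₂) ≤ M (1, t₁) + M (0, t₂) := by rw [h]; exact map_add_le_add M _ _
      _ = M (1, t₁) + |t₂| := by rw [ncoord2 M h01]
  have hmono : ∀ t₁ t₂ : ℝ, 0 ≤ t₁ → t₁ ≤ t₂ → M (1, t₁) ≤ M (1, t₂) := by
    intro t₁ t₂ h1 h2
    exact nmono M hu (by simp) (by rw [abs_of_nonneg h1]; exact h2)
  have hMb : M (1, b) = 1 := by
    have hle : M (1, b) ≤ 1 := by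
      apply le_of_forall_pos_le_add
      intro η hη
      obtain ⟨t, htS, htlt⟩ := exists_lt_of_lt_csSup hSne (show b - η < sSup S by linarith)
      have htb : t ≤ b := le_csSup hSbdd htS
      calc M (1, b) = M (1, t + (b - t)) := by ring_nf
        _ ≤ M (1, t) + |b - t| := htri t (b - t)
        _ ≤ 1 + η := by
            rw [abs_of_nonneg (by linarith)]
            have := htS.2; linarith
    have hge : 1 ≤ M (1, b) := by
      have := hmono 0 b (le_refl 0) hb0
      rw [h10] at this; exact this
    linarith
  refine ⟨b, hb0, hb1, hMb, ?_⟩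
  intro d hd
  have hub : M (1, b + d) ≤ 1 + d := by
    calc M (1, b + d) ≤ M (1, b) + |d| := htri b d
      _ = 1 + d := by rw [hMb, abs_of_pos hd]
  rcases lt_or_ge (M (1, b + d)) (1 + d) with hlt | hge
  · exfalso
    set δ := 1 + d - M (1, b + d) with hδdef
    have hδ : 0 < δ := by linarith
    set η := δ / 3 with hηdef
    have hη : 0 < η := by positivity
    -- Step A: ∃ ε₁ > 0, every t ≥ 0 with M(1,t) ≤ 1+ε₁ satisfies t ≤ b + η
    have stepA : ∃ ε₁ > (0:ℝ), ∀ t : ℝ, 0 ≤ t → M (1, t) ≤ 1 + ε₁ → t ≤ b + η := by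
      by_contra hcon
      push_neg at hcon
      have hbη : M (1, b + η) ≤ 1 := by
        apply le_of_forall_pos_le_add
        intro ε hε
        obtain ⟨t, ht0, htM, htgt⟩ := hcon ε hε
        calc M (1, b + η) ≤ M (1, t) := hmono (b + η) t (by linarith) (le_of_lt htgt)
          _ ≤ 1 + ε := htM
      have : b + η ∈ S := ⟨by linarith, hbη⟩
      have := le_csSup hSbdd this
      linarith
    obtain ⟨ε₁, hε₁, hA⟩ := stepA
    set ε := min ε₁ η with hεdef
    have hεpos : 0 < ε := lt_min hε₁ hη
    obtain ⟨t, ht0, htM, htM2⟩ := key d hd ε hεpos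
    have htb : t ≤ b + η := hA t ht0 (le_trans htM (by simp [hεdef, min_le_left]))
    have h2 : M (1, t + d) ≤ M (1, b + η + d) :=
      hmono (t + d) (b + η + d) (by linarith) (by linarith)
    have h3 : M (1, b + η + d) ≤ M (1, b + d) + η := by
      calc M (1, b + η + d) = M (1, (b + d) + η) := by ring_nf
        _ ≤ M (1, b + d) + |η| := htri (b + d) η
        _ = M (1, b + d) + η := by rw [abs_of_pos hη]
    have hεη : ε ≤ η := min_le_right _ _
    -- 1 + d - ε ≤ M (1,t+d) ≤ M(1,b+d) + η = 1 + d - δ + η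
    have : 1 + d - ε ≤ 1 + d - δ + η := by
      calc 1 + d - ε ≤ M (1, t + d) := htM2
        _ ≤ M (1, b + d) + η := le_trans h2 h3
        _ = 1 + d - δ + η := by rw [hδdef]; ring
    rw [hηdef] at this hεη
    linarith
  · linarith

/-- If `N` is a `1`-unconditional norm on `ℝ²` with `N (1,0) = N (0,1) = 1`, `X₁, X₂`
are nonzero Banach spaces and the `N`-sum `X` of `X₁` and `X₂` (the product `X₁ × X₂`
with the complete norm `‖(x₁, x₂)‖ = N (‖x₁‖, ‖x₂‖)`) has the Daugavet property, then
`N` is either the `ℓ¹`-norm or the `ℓ∞`-norm on `ℝ²`. -/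
theorem unconditionalSum_daugavet_implies_one_or_infty
    (N : Seminorm ℝ (ℝ × ℝ))
    (hNdef : ∀ a : ℝ × ℝ, N a = 0 → a = 0)
    (hNuncond : ∀ a : ℝ × ℝ, N a = N (|a.1|, |a.2|))
    (hN10 : N (1, 0) = 1) (hN01 : N (0, 1) = 1)
    (X₁ X₂ : Type*)
    [NormedAddCommGroup X₁] [NormedSpace ℝ X₁] [CompleteSpace X₁] [Nontrivial X₁]
    [NormedAddCommGroup X₂] [NormedSpace ℝ X₂] [CompleteSpace X₂] [Nontrivial X₂]
    (V : Type*) [NormedAddCommGroup V] [NormedSpace ℝ V] [CompleteSpace V]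
    (e : V ≃ₗ[ℝ] X₁ × X₂)
    (hnorm : ∀ v : V, ‖v‖ = N (‖(e v).1‖, ‖(e v).2‖))
    (hV : DaugavetProperty V) :
    (∀ a : ℝ × ℝ, N a = |a.1| + |a.2|) ∨ (∀ a : ℝ × ℝ, N a = max |a.1| |a.2|) := by
  -- the swapped seminorm
  set Ns : Seminorm ℝ (ℝ × ℝ) := N.comp (LinearEquiv.prodComm ℝ ℝ ℝ).toLinearMap with hNs
  have hNsapp : ∀ a : ℝ × ℝ, Ns a = N (a.2, a.1) := fun a => rfl
  have hNsuncond : ∀ a : ℝ × ℝ, Ns a = Ns (|a.1|, |a.2|) := by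
    intro a
    rw [hNsapp, hNsapp, hNuncond (a.2, a.1)]
  have hNs10 : Ns (1, 0) = 1 := by rw [hNsapp]; exact hN01
  have hNs01 : Ns (0, 1) = 1 := by rw [hNsapp]; exact hN10
  -- key property for N and for Ns
  have key₁ := key_aux N hNuncond hN10 hN01 X₁ X₂ V e hnorm hV
  have key₂ : ∀ d > (0:ℝ), ∀ ε > (0:ℝ),
      ∃ t ≥ (0:ℝ), Ns (1, t) ≤ 1 + ε ∧ 1 + d - ε ≤ Ns (1, t + d) := by
    have hnorm' : ∀ v : V,
        ‖v‖ = Ns (‖((e.trans (LinearEquiv.prodComm ℝ X₁ X₂)) v).1‖,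
                  ‖((e.trans (LinearEquiv.prodComm ℝ X₁ X₂)) v).2‖) := by
      intro v
      rw [hnorm v, hNsapp]
      rfl
    exact key_aux Ns hNsuncond hNs10 hNs01 X₂ X₁ V
      (e.trans (LinearEquiv.prodComm ℝ X₁ X₂)) hnorm' hV
  rcases le_or_gt (N (1, 1)) 1 with hc | hc
  · -- sup norm case
    right
    intro a
    rw [hNuncond a]
    set x := |a.1| with hx
    set y := |a.2| with hy
    have hx0 : 0 ≤ x := abs_nonneg _
    have hy0 : 0 ≤ y := abs_nonneg _
    have hm0 : 0 ≤ max x y := le_trans hx0 (le_max_left _ _)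
    apply le_antisymm
    · have h1 : N (x, y) ≤ N (max x y, max x y) :=
        nmono N hNuncond (by rw [abs_of_nonneg hx0]; exact le_max_left _ _)
          (by rw [abs_of_nonneg hy0]; exact le_max_right _ _)
      have h2 : N (max x y, max x y) = max x y * N (1, 1) := by
        have : ((max x y, max x y) : ℝ × ℝ) = (max x y) • ((1, 1) : ℝ × ℝ) := by
          rw [Prod.smul_mk, smul_eq_mul, mul_one]
        rw [this, map_smul_eq_mul, Real.norm_eq_abs, abs_of_nonneg hm0]
      calc N (x, y) ≤ max x y * N (1, 1) := h2 ▸ h1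
        _ ≤ max x y * 1 := by
            apply mul_le_mul_of_nonneg_left hc hm0
        _ = max x y := mul_one _
    · apply max_le
      · have : N (x, 0) ≤ N (x, y) :=
          nmono N hNuncond (by rw [abs_of_nonneg hx0]) (by simp [hy0])
        rw [ncoord1 N hN10, abs_of_nonneg hx0] at this
        exact this
      · have : N (0, y) ≤ N (x, y) :=
          nmono N hNuncond (by simp [hx0]) (by rw [abs_of_nonneg hy0])
        rw [ncoord2 N hN01, abs_of_nonneg hy0] at this
        exact this
  · -- ℓ¹ case
    left
    obtain ⟨β, hβ0, hβ1, hβM, hβd⟩ := claim_beta N hNuncond hN10 hN01 key₁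
    obtain ⟨α, hα0, hα1, hαM, hαd⟩ := claim_beta Ns hNsuncond hNs10 hNs01 key₂
    have hαlt : α < 1 := by
      rcases lt_or_eq_of_le hα1 with h | h
      · exact h
      · exfalso; rw [h, hNsapp] at hαM; linarith
    have hβlt : β < 1 := by
      rcases lt_or_eq_of_le hβ1 with h | h
      · exact h
      · exfalso; rw [h] at hβM; linarith
    -- β = 0
    have hβz : β = 0 := by
      by_contra hne
      have hβpos : 0 < β := lt_of_le_of_ne hβ0 (Ne.symm hne)
      have hβinv : 1 ≤ β⁻¹ := by nlinarith [mul_inv_cancel₀ (ne_of_gt hβpos), inv_pos.mpr hβpos]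
      have hsm : ((1, β) : ℝ × ℝ) = β • ((β⁻¹, 1) : ℝ × ℝ) := by
        rw [Prod.smul_mk, smul_eq_mul, smul_eq_mul, mul_inv_cancel₀ (ne_of_gt hβpos), mul_one]
      have h1 : N (1, β) = β * N (β⁻¹, 1) := by
        rw [hsm, map_smul_eq_mul, Real.norm_eq_abs, abs_of_pos hβpos]
      have h2 : N (β⁻¹, 1) = Ns (1, β⁻¹) := (hNsapp (1, β⁻¹)).symm
      have h3 : Ns (1, β⁻¹) = 1 + (β⁻¹ - α) := by
        have hd : 0 < β⁻¹ - α := by linarith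
        have := hαd (β⁻¹ - α) hd
        rw [show α + (β⁻¹ - α) = β⁻¹ by ring] at this
        exact this
      rw [hβM] at h1
      rw [h2, h3] at h1
      have : β * (1 + (β⁻¹ - α)) = β + 1 - β * α := by
        field_simp
        ring
      rw [this] at h1
      nlinarith
    -- α = 0
    have hαz : α = 0 := by
      by_contra hne
      have hαpos : 0 < α := lt_of_le_of_ne hα0 (Ne.symm hne)
      have hαinv : 0 < α⁻¹ := by positivity
      have hsm : ((α, 1) : ℝ × ℝ) = α • ((1, α⁻¹) : ℝ × ℝ) := by
        rw [Prod.smul_mk, smul_eq_mul, smul_eq_mul, mul_inv_cancel₀ (ne_of_gt hαpos), mul_one]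
      have h1 : Ns (1, α) = α * N (1, α⁻¹) := by
        rw [hNsapp, hsm, map_smul_eq_mul, Real.norm_eq_abs, abs_of_pos hαpos]
      have h2 : N (1, α⁻¹) = 1 + α⁻¹ := by
        have := hβd α⁻¹ hαinv
        rw [hβz, zero_add] at this
        exact this
      rw [hαM, h2] at h1
      have : α * (1 + α⁻¹) = α + 1 := by field_simp
      rw [this] at h1
      linarith
    -- conclude ℓ¹
    intro a
    rw [hNuncond a]
    set x := |a.1| with hx
    set y := |a.2| with hy
    have hx0 : 0 ≤ x := abs_nonneg _
    have hy0 : 0 ≤ y := abs_nonneg _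
    rcases eq_or_lt_of_le hx0 with h | h
    · rw [← h, ncoord2 N hN01, abs_of_nonneg hy0, zero_add]
    · have hsm : ((x, y) : ℝ × ℝ) = x • ((1, x⁻¹ * y) : ℝ × ℝ) := by
        rw [Prod.smul_mk, smul_eq_mul, smul_eq_mul, mul_one, ← mul_assoc,
          mul_inv_cancel₀ (ne_of_gt h), one_mul]
      rw [hsm, map_smul_eq_mul, Real.norm_eq_abs, abs_of_pos h]
      rcases eq_or_lt_of_le hy0 with hy' | hy'
      · rw [← hy', mul_zero, hN10, mul_one, add_zero]
      · have hxy : 0 < x⁻¹ * y := by positivity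
        have := hβd (x⁻¹ * y) hxy
        rw [hβz, zero_add] at this
        rw [this, mul_add, mul_one, ← mul_assoc, mul_inv_cancel₀ (ne_of_gt h), one_mul]
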